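/- Let m ≥ 1, let Y be a (1+m)×(1+m) real symmetric positive semidefinite matrix with rank(Y) = m, and let φ̂ ∈ ℝ^m be such that ⟨v vᵀ, Y⟩ = 0 where v := (1, φ̂) ∈ ℝ^{1+m}. Write Y in blocks after the first row/column as Y = [[Y_c, Y_lᵀ], [Y_l, Y_Q]] with Y_c ∈ ℝ, Y_l ∈ ℝ^m, Y_Q an m×m matrix. Then Y_Q is positive definite, Y_l = −Y_Q φ̂, and Y_c = φ̂ᵀ Y_Q φ̂; equivalently, setting Σ := Y_Q⁻¹ (which is positive definite), Y equals the block matrix [[φ̂ᵀ Σ⁻¹ φ̂, −(Σ⁻¹ φ̂)ᵀ], [−Σ⁻¹ φ̂, Σ⁻¹]], and for every w ∈ ℝ^m, (1, w)ᵀ Y (1, w) = (w − φ̂)ᵀ Σ⁻¹ (w − φ̂). -/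

import Mathlib

open Matrix

/-- reverse direction of Theorem 5.  A symmetric PSD dual solution `Y` of
corank 1 that is complementary to the rank-1 moment matrix `v vᵀ`, `v = (1, φ̂)`,
necessarily has the SOS-belief block form: its bottom-right block `Y_Q` is positive
definite, `Y_l = −Y_Q φ̂`, `Y_c = φ̂ᵀ Y_Q φ̂`; equivalently, with `Σ := Y_Q⁻¹ ≻ 0`,
`Y = [[φ̂ᵀ Σ⁻¹ φ̂, −(Σ⁻¹ φ̂)ᵀ], [−Σ⁻¹ φ̂, Σ⁻¹]]` and the quadratic form of `Y` on
`(1, w)` is `(w − φ̂)ᵀ Σ⁻¹ (w − φ̂)`. -/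
theorem dual_solution_sos_belief_form {m : ℕ} (hm : 1 ≤ m)
    (Y : Matrix (Unit ⊕ Fin m) (Unit ⊕ Fin m) ℝ)
    (hYsymm : Y.IsSymm) (hYpsd : Y.PosSemidef) (hYrank : Y.rank = m)
    (φh : Fin m → ℝ)
    (v : Unit ⊕ Fin m → ℝ) (hv : v = Sum.elim (fun _ => (1 : ℝ)) φh)
    (hcompl : trace ((vecMulVec v v)ᵀ * Y) = 0) :
    (Y.toBlocks₂₂).PosDef ∧
    (∀ i : Fin m, Y (Sum.inr i) (Sum.inl ()) = -((Y.toBlocks₂₂).mulVec φh) i) ∧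
    Y (Sum.inl ()) (Sum.inl ()) = φh ⬝ᵥ (Y.toBlocks₂₂).mulVec φh ∧
    ((Y.toBlocks₂₂)⁻¹).PosDef ∧
    Y = fromBlocks
      (Matrix.of fun _ _ => φh ⬝ᵥ (((Y.toBlocks₂₂)⁻¹)⁻¹).mulVec φh)
      (Matrix.of fun _ j => -((((Y.toBlocks₂₂)⁻¹)⁻¹).mulVec φh) j)
      (Matrix.of fun i _ => -((((Y.toBlocks₂₂)⁻¹)⁻¹).mulVec φh) i)
      (((Y.toBlocks₂₂)⁻¹)⁻¹) ∧
    (∀ w : Fin m → ℝ,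
      (Sum.elim (fun _ => (1 : ℝ)) w) ⬝ᵥ Y.mulVec (Sum.elim (fun _ => (1 : ℝ)) w) =
        (w - φh) ⬝ᵥ (((Y.toBlocks₂₂)⁻¹)⁻¹).mulVec (w - φh)) := by
  classical
  set D := Y.toBlocks₂₂ with hD
  -- quadratic form at v is zero
  have hq : v ⬝ᵥ Y *ᵥ v = 0 := by
    rw [← hcompl]
    simp only [trace, diag, mul_apply, transpose_apply, vecMulVec_apply, dotProduct, mulVec,
      dotProduct, Finset.mul_sum]
    rw [Finset.sum_comm]
    refine Finset.sum_congr rfl fun i _ => Finset.sum_congr rfl fun j _ => ?_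
    rw [hYsymm.apply i j]
    ring
  have hker : Y *ᵥ v = 0 := by
    refine (hYpsd.dotProduct_mulVec_zero_iff v).mp ?_
    simpa using hq
  -- D is PSD
  have hDpsd : D.PosSemidef := by
    have := hYpsd.submatrix (Sum.inr : Fin m → Unit ⊕ Fin m)
    convert this using 2
    rfl
  -- kernel has dimension 1
  have hcard : Fintype.card (Unit ⊕ Fin m) = m + 1 := by simp [Fintype.card_sum]; omega
  have hrk : Y.rank + Module.finrank ℝ (LinearMap.ker Y.mulVecLin) = m + 1 := by
    have := Y.mulVecLin.finrank_range_add_finrank_ker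
    rw [Matrix.rank] at hYrank ⊢
    rw [this, Module.finrank_pi, hcard]
  have hkerdim : Module.finrank ℝ (LinearMap.ker Y.mulVecLin) = 1 := by omega
  have hvne : v ≠ 0 := by
    intro h
    have := congrFun h (Sum.inl ())
    simp [hv] at this
  have hvmem : v ∈ LinearMap.ker Y.mulVecLin := by
    simpa [Matrix.mulVecLin] using hker
  -- D is PosDef
  have hDpd : D.PosDef := by
    refine ⟨hDpsd.1, fun z hz => ?_⟩
    rcases lt_or_eq_of_le (hDpsd.2 z) with h | h
    · simpa using h
    · exfalso
      have hDz : D *ᵥ z = 0 := (hDpsd.dotProduct_mulVec_zero_iff z).mp (by simpa [dotProduct, mulVec, Finsupp.sum_fintype, Finset.mul_sum, mul_assoc] using h.symm)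
      set u : Unit ⊕ Fin m → ℝ := Sum.elim 0 z with hu
      have huq : u ⬝ᵥ Y *ᵥ u = 0 := by
        conv_lhs => rw [← fromBlocks_toBlocks Y]
        rw [hu, fromBlocks_mulVec, sumElim_dotProduct_sumElim]
        simp [← hD, hDz]
      have hYu : Y *ᵥ u = 0 := (hYpsd.dotProduct_mulVec_zero_iff u).mp (by simpa using huq)
      have humem : u ∈ LinearMap.ker Y.mulVecLin := by
        simpa [Matrix.mulVecLin] using hYu
      obtain ⟨c, hc⟩ := (finrank_eq_one_iff_of_nonzero'
        (⟨v, hvmem⟩ : LinearMap.ker Y.mulVecLin)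
        (by simpa [Subtype.ext_iff] using hvne)).mp hkerdim ⟨u, humem⟩
      have hc' : c • v = u := congrArg Subtype.val hc
      have hc0 : c = 0 := by
        have := congrFun hc' (Sum.inl ())
        simpa [hv, hu] using this
      have : z = 0 := by
        ext i
        have := congrFun hc' (Sum.inr i)
        simpa [hc0, hu] using this.symm
      exact hz this
  -- linear relation from kernel
  have hl : ∀ i : Fin m, Y (Sum.inr i) (Sum.inl ()) = -(D *ᵥ φh) i := by
    intro i
    have := congrFun hker (Sum.inr i)
    simp only [mulVec, dotProduct, Fintype.sum_sum_type, Finset.univ_unique, Finset.sum_singleton,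
      hv, Sum.elim_inl, Sum.elim_inr, Pi.zero_apply, mul_one] at this
    have : Y (Sum.inr i) (Sum.inl ()) + ∑ j, Y (Sum.inr i) (Sum.inr j) * φh j = 0 := by
      simpa using this
    simp only [mulVec, dotProduct, hD, toBlocks₂₂, of_apply]
    linarith
  have hc : Y (Sum.inl ()) (Sum.inl ()) = φh ⬝ᵥ D *ᵥ φh := by
    have h0 := congrFun hker (Sum.inl ())
    simp only [mulVec, dotProduct, Fintype.sum_sum_type, Finset.univ_unique, Finset.sum_singleton,
      hv, Sum.elim_inl, Sum.elim_inr, Pi.zero_apply, mul_one] at h0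
    have h0 : Y (Sum.inl ()) (Sum.inl ()) + ∑ j, Y (Sum.inl ()) (Sum.inr j) * φh j = 0 := by
      simpa using h0
    have hsym : ∀ j, Y (Sum.inl ()) (Sum.inr j) = Y (Sum.inr j) (Sum.inl ()) :=
      fun j => (hYsymm.apply _ _).symm
    calc Y (Sum.inl ()) (Sum.inl ()) = -∑ j, Y (Sum.inl ()) (Sum.inr j) * φh j := by linarith
    _ = ∑ j, (D *ᵥ φh) j * φh j := by
        rw [← Finset.sum_neg_distrib]
        refine Finset.sum_congr rfl fun j _ => ?_
        rw [hsym j, hl j]; ring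
    _ = φh ⬝ᵥ D *ᵥ φh := by
        simp [dotProduct, mul_comm]
  have hdet : IsUnit D.det := isUnit_iff_ne_zero.mpr hDpd.det_pos.ne'
  have hDD : D⁻¹⁻¹ = D := Matrix.nonsing_inv_nonsing_inv D hdet
  have hinv : (D⁻¹).PosDef := hDpd.inv
  have hDsymm : Dᵀ = D := hDpd.1
  refine ⟨hDpd, hl, hc, hinv, ?_, ?_⟩
  · rw [hDD]
    ext i j
    rcases i with i | i <;> rcases j with j | j
    · simpa [fromBlocks] using hc
    · have := (hYsymm.apply (Sum.inl i) (Sum.inr j)).symm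
      simp only [fromBlocks, Sum.elim_inl, Sum.elim_inr, of_apply]
      rw [this, hl j]
    · simpa [fromBlocks] using hl i
    · simp [fromBlocks, hD, toBlocks₂₂]
  · intro w
    rw [hDD]
    set u' : Unit ⊕ Fin m → ℝ := Sum.elim 0 (w - φh) with hu'
    have hsplit : Sum.elim (fun _ => (1:ℝ)) w = v + u' := by
      funext s
      rcases s with s | s <;> simp [hv, hu']
    rw [hsplit, mulVec_add, hker, zero_add, add_dotProduct]
    have h1 : v ⬝ᵥ Y *ᵥ u' = 0 := by
      rw [dotProduct_mulVec, ← mulVec_transpose, hYsymm.eq, hker, zero_dotProduct]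
    have h2 : u' ⬝ᵥ Y *ᵥ u' = (w - φh) ⬝ᵥ D *ᵥ (w - φh) := by
      conv_lhs => rw [← fromBlocks_toBlocks Y]
      rw [hu', fromBlocks_mulVec, sumElim_dotProduct_sumElim]
      simp [← hD]
    rw [h1, h2, zero_add]
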